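/- Let N ∈ (1,∞), K ∈ ℝ, p ≥ 1 with p > N/2, and a < b be real numbers. Let h ∈ C²((a,b)) with h > 0 on (a,b), let κ : (a,b) → ℝ be continuous with (log h)''(t) + ((log h)'(t))²/(N−1) ≤ −κ(t) for almost every t ∈ (a,b), let G ∈ C¹((a,b)) satisfy G'(t) + G(t)²/(N−1) = −K on (a,b), and let φ ∈ C¹((a,b)) with φ > 0. Set ψ := max((log h)' − G, 0) and ρ(t) := max(K − κ(t), 0). Then the function φ·ψ^{2p−1}·h is locally Lipschitz on (a,b) and for almost every r ∈ (a,b) it holds (φ·ψ^{2p−1}·h)'(r) ≤ (2p−1)·ρ(r)·φ(r)·ψ(r)^{2p−2}·h(r) − ((2p−N)/(N−1))·φ(r)·ψ(r)^{2p}·h(r) + max(φ'(r)/φ(r) − ((4p−N−1)/(N−1))·G(r), 0)·φ(r)·ψ(r)^{2p−1}·h(r). -/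

import Mathlib

open Real MeasureTheory Filter Set
open scoped ENNReal NNReal Topology

/-- `f` is locally Lipschitz on the set `s`. -/
def LocLipschitzOn (f : ℝ → ℝ) (s : Set ℝ) : Prop :=
  ∀ x ∈ s, ∃ C : NNReal, ∃ t ∈ nhdsWithin x s, LipschitzOnWith C f t


lemma aux_mul_lip {f g : ℝ → ℝ} {s : Set ℝ} {Kf Kg : ℝ≥0} {A B : ℝ}
    (hf : LipschitzOnWith Kf f s) (hg : LipschitzOnWith Kg g s)
    (hA : ∀ x ∈ s, |f x| ≤ A) (hB : ∀ x ∈ s, |g x| ≤ B) :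
    LipschitzOnWith (A * Kg + B * Kf).toNNReal (fun x => f x * g x) s := by
  rw [lipschitzOnWith_iff_dist_le_mul] at hf hg ⊢
  intro x hx y hy
  have h1 : dist (f x * g x) (f y * g y) ≤ |f x| * dist (g x) (g y) + |g y| * dist (f x) (f y) := by
    rw [Real.dist_eq, Real.dist_eq, Real.dist_eq]
    calc |f x * g x - f y * g y| = |f x * (g x - g y) + (f x - f y) * g y| := by ring_nf
      _ ≤ |f x * (g x - g y)| + |(f x - f y) * g y| := abs_add_le _ _
      _ = |f x| * |g x - g y| + |g y| * |f x - f y| := by rw [abs_mul, abs_mul]; ring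
  have h2 : |f x| * dist (g x) (g y) ≤ A * (Kg * dist x y) :=
    mul_le_mul (hA x hx) (hg x hx y hy) dist_nonneg ((abs_nonneg _).trans (hA x hx))
  have h3 : |g y| * dist (f x) (f y) ≤ B * (Kf * dist x y) :=
    mul_le_mul (hB y hy) (hf x hx y hy) dist_nonneg ((abs_nonneg _).trans (hB y hy))
  have h4 : (A * Kg + B * Kf : ℝ) ≤ ((A * Kg + B * Kf).toNNReal : ℝ) :=
    Real.le_coe_toNNReal _
  nlinarith [dist_nonneg (x := x) (y := y), h1, h2, h3]

lemma aux_rpow_lip {q M : ℝ} (hq : 1 ≤ q) (hM : 1 ≤ M) :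
    LipschitzOnWith (q * M ^ (q - 1)).toNNReal (fun x : ℝ => x ^ q) (Set.Icc 0 M) := by
  apply (convex_Icc (0:ℝ) M).lipschitzOnWith_of_nnnorm_hasDerivWithin_le
    (f' := fun x => q * x ^ (q - 1))
  · intro x hx
    exact (Real.hasDerivAt_rpow_const (Or.inr hq)).hasDerivWithinAt
  · intro x hx
    rw [← NNReal.coe_le_coe, coe_nnnorm, Real.coe_toNNReal _ (by positivity), Real.norm_eq_abs]
    have h1 : x ^ (q - 1) ≤ M ^ (q - 1) :=
      Real.rpow_le_rpow hx.1 hx.2 (by linarith)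
    have h2 : (0:ℝ) ≤ x ^ (q - 1) := Real.rpow_nonneg hx.1 _
    rw [abs_of_nonneg (by positivity)]
    nlinarith

set_option maxHeartbeats 1600000 in
/-- derivative estimate for the weighted deficit `φ·ψ^{2p−1}·h`, smooth case.
With `ψ := max((log h)' − G, 0)` and `ρ := max(K − κ, 0)`, the function `φ ψ^{2p−1} h` is
locally Lipschitz on `(a,b)` and for a.e. `r ∈ (a,b)`:
`(φ ψ^{2p−1} h)'(r) ≤ (2p−1) ρ φ ψ^{2p−2} h − ((2p−N)/(N−1)) φ ψ^{2p} h
  + max(φ'/φ − ((4p−N−1)/(N−1)) G, 0) φ ψ^{2p−1} h`. -/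
theorem weighted_deficit_derivative_estimate
    (N K p : ℝ) (hN : 1 < N) (hp1 : 1 ≤ p) (hp : N / 2 < p)
    (a b : ℝ) (hab : a < b)
    (h κ G φ : ℝ → ℝ)
    (hh : ContDiffOn ℝ 2 h (Set.Ioo a b))
    (hpos : ∀ t ∈ Set.Ioo a b, 0 < h t)
    (hκ : ContinuousOn κ (Set.Ioo a b))
    (hineq : ∀ᵐ t : ℝ ∂volume, t ∈ Set.Ioo a b →
      deriv (deriv (fun s => Real.log (h s))) t +
        (deriv (fun s => Real.log (h s)) t) ^ 2 / (N - 1) ≤ -κ t)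
    (hG : ContDiffOn ℝ 1 G (Set.Ioo a b))
    (hRiccati : ∀ t ∈ Set.Ioo a b, deriv G t + G t ^ 2 / (N - 1) = -K)
    (hφ : ContDiffOn ℝ 1 φ (Set.Ioo a b))
    (hφpos : ∀ t ∈ Set.Ioo a b, 0 < φ t) :
    LocLipschitzOn
      (fun t => φ t * max (deriv (fun s => Real.log (h s)) t - G t) 0 ^ (2 * p - 1) * h t)
      (Set.Ioo a b) ∧
    ∀ᵐ r : ℝ ∂volume, r ∈ Set.Ioo a b →
      deriv (fun t =>
          φ t * max (deriv (fun s => Real.log (h s)) t - G t) 0 ^ (2 * p - 1) * h t) r ≤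
        (2 * p - 1) * max (K - κ r) 0 * φ r *
            max (deriv (fun s => Real.log (h s)) r - G r) 0 ^ (2 * p - 2) * h r
          - ((2 * p - N) / (N - 1)) * φ r *
            max (deriv (fun s => Real.log (h s)) r - G r) 0 ^ (2 * p) * h r
          + max (deriv φ r / φ r - ((4 * p - N - 1) / (N - 1)) * G r) 0 * φ r *
            max (deriv (fun s => Real.log (h s)) r - G r) 0 ^ (2 * p - 1) * h r := by
  constructor
  · intro x hx
    have hq1 : (1:ℝ) ≤ 2 * p - 1 := by linarith
    have hO : IsOpen (Set.Ioo a b) := isOpen_Ioo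
    have hlogh : ContDiffOn ℝ 2 (fun s => Real.log (h s)) (Set.Ioo a b) :=
      hh.log (fun t ht => (hpos t ht).ne')
    have hL : ContDiffOn ℝ 1 (deriv (fun s => Real.log (h s))) (Set.Ioo a b) :=
      hlogh.deriv_of_isOpen hO (by norm_num)
    have hv : ContDiffOn ℝ 1 (fun t => deriv (fun s => Real.log (h s)) t - G t) (Set.Ioo a b) :=
      hL.sub hG
    have hxnh : Set.Ioo a b ∈ 𝓝 x := hO.mem_nhds hx
    -- Lipschitz neighborhoods for φ*h and v
    obtain ⟨K1, t1, ht1, hlip1⟩ :=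
      (((hφ.contDiffAt hxnh)).mul ((hh.of_le (by norm_num)).contDiffAt hxnh)).exists_lipschitzOnWith
    obtain ⟨K2, t2, ht2, hlip2⟩ := (hv.contDiffAt hxnh).exists_lipschitzOnWith
    -- pick a compact interval inside all three
    obtain ⟨ε, hε, hball⟩ := Metric.mem_nhds_iff.1 (inter_mem (inter_mem ht1 ht2) hxnh)
    set S : Set ℝ := Metric.closedBall x (ε / 2) with hS
    have hSsub : S ⊆ t1 ∩ t2 ∩ Set.Ioo a b :=
      (Metric.closedBall_subset_ball (by linarith)).trans hball
    have hScpt : IsCompact S := isCompact_closedBall x (ε / 2)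
    have hSnh : S ∈ 𝓝 x := Metric.closedBall_mem_nhds x (by linarith)
    -- bound for v on S
    set v : ℝ → ℝ := fun t => deriv (fun s => Real.log (h s)) t - G t with hvdef
    have hvS : LipschitzOnWith K2 v S := hlip2.mono (fun y hy => (hSsub hy).1.2)
    obtain ⟨Cv, hCv⟩ := hScpt.exists_bound_of_continuousOn hvS.continuousOn
    set M : ℝ := max Cv 1 with hM
    have hM1 : (1:ℝ) ≤ M := le_max_right _ _
    -- the relu ∘ v is Lipschitz and maps S into Icc 0 M
    have hrelu : LipschitzWith 1 (fun y : ℝ => max y 0) := by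
      simpa using LipschitzWith.id.max (LipschitzWith.const (0:ℝ))
    have hmv : LipschitzOnWith (1 * K2) (fun t => max (v t) 0) S := hrelu.comp_lipschitzOnWith hvS
    have hmaps : Set.MapsTo (fun t => max (v t) 0) S (Set.Icc 0 M) := by
      intro y hy
      refine ⟨le_max_right _ _, ?_⟩
      have := hCv y hy
      rw [Real.norm_eq_abs] at this
      exact max_le ((le_abs_self _).trans (this.trans (le_max_left _ _))) (by linarith)
    -- ψ^(2p-1) is Lipschitz on S
    have hBlip : LipschitzOnWith (((2 * p - 1) * M ^ (2 * p - 1 - 1)).toNNReal * (1 * K2))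
        (fun t => max (v t) 0 ^ (2 * p - 1)) S :=
      (aux_rpow_lip hq1 hM1).comp hmv hmaps
    -- φ*h is Lipschitz on S
    have hAlip : LipschitzOnWith K1 (fun t => φ t * h t) S :=
      hlip1.mono (fun y hy => (hSsub hy).1.1)
    -- bounds
    obtain ⟨CA, hCA⟩ := hScpt.exists_bound_of_continuousOn hAlip.continuousOn
    obtain ⟨CB, hCB⟩ := hScpt.exists_bound_of_continuousOn hBlip.continuousOn
    have hFlip := aux_mul_lip hAlip hBlip
      (fun y hy => (Real.norm_eq_abs _ ▸ hCA y hy))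
      (fun y hy => (Real.norm_eq_abs _ ▸ hCB y hy))
    have key : (fun t => φ t * max (deriv (fun s => Real.log (h s)) t - G t) 0 ^ (2 * p - 1) * h t)
        = fun t => φ t * h t * max (deriv (fun s => Real.log (h s)) t - G t) 0 ^ (2 * p - 1) := by
      funext t; ring
    exact ⟨_, S, mem_nhdsWithin_of_mem_nhds hSnh, key ▸ hFlip⟩
  · 
    have hN1 : (0:ℝ) < N - 1 := by linarith
    have hq1 : (1:ℝ) ≤ 2 * p - 1 := by linarith
    have hO : IsOpen (Set.Ioo a b) := isOpen_Ioo
    have hlogh : ContDiffOn ℝ 2 (fun s => Real.log (h s)) (Set.Ioo a b) :=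
      hh.log (fun t ht => (hpos t ht).ne')
    have hLc : ContDiffOn ℝ 1 (deriv (fun s => Real.log (h s))) (Set.Ioo a b) :=
      hlogh.deriv_of_isOpen hO (by norm_num)
    filter_upwards [hineq] with r hr1 hr
    set L := deriv (fun s => Real.log (h s)) with hLdef
    have hrnh : Set.Ioo a b ∈ 𝓝 r := hO.mem_nhds hr
    have hP : 0 < φ r := hφpos r hr
    have hH : 0 < h r := hpos r hr
    by_cases hvr : L r - G r ≤ 0
    · -- ψ(r) = 0 : local minimum, derivative vanishes, RHS nonnegative
      have hmax : max (L r - G r) 0 = 0 := max_eq_right hvr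
      have hF0 : deriv (fun t => φ t * max (L t - G t) 0 ^ (2 * p - 1) * h t) r = 0 := by
        apply IsLocalMin.deriv_eq_zero
        have hFr : φ r * max (L r - G r) 0 ^ (2 * p - 1) * h r = 0 := by
          rw [hmax, Real.zero_rpow (by linarith : 2 * p - 1 ≠ 0), mul_zero, zero_mul]
        refine Filter.eventually_of_mem hrnh (fun t ht => ?_)
        show φ r * max (L r - G r) 0 ^ (2 * p - 1) * h r ≤ _
        rw [hFr]
        exact mul_nonneg (mul_nonneg (hφpos t ht).le
          (Real.rpow_nonneg (le_max_right _ _) _)) (hpos t ht).le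
      rw [hF0, hmax, Real.zero_rpow (by positivity : 2 * p ≠ 0),
        Real.zero_rpow (by linarith : 2 * p - 1 ≠ 0)]
      have h1 : (0:ℝ) ≤ (0:ℝ) ^ (2 * p - 2) := Real.rpow_nonneg le_rfl _
      have h2 : (0:ℝ) ≤ max (K - κ r) 0 := le_max_right _ _
      have h3 : (0:ℝ) ≤ 2 * p - 1 := by linarith
      nlinarith [mul_nonneg (mul_nonneg (mul_nonneg (mul_nonneg h3 h2) hP.le) h1) hH.le]
    · push_neg at hvr
      -- derivatives of the pieces
      have hdφ : HasDerivAt φ (deriv φ r) r :=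
        ((hφ.differentiableOn one_ne_zero).differentiableAt hrnh).hasDerivAt
      have hdh : HasDerivAt h (deriv h r) r :=
        ((hh.differentiableOn (by norm_num)).differentiableAt hrnh).hasDerivAt
      have hlog : HasDerivAt (fun s => Real.log (h s)) (deriv h r / h r) r :=
        hdh.log hH.ne'
      have hLr : L r = deriv h r / h r := hlog.deriv
      have hdh2 : deriv h r = L r * h r := by rw [hLr]; field_simp
      have hdL : HasDerivAt L (deriv L r) r :=
        ((hLc.differentiableOn one_ne_zero).differentiableAt hrnh).hasDerivAt
      have hdG : HasDerivAt G (deriv G r) r :=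
        ((hG.differentiableOn one_ne_zero).differentiableAt hrnh).hasDerivAt
      have hdv : HasDerivAt (fun t => L t - G t) (deriv L r - deriv G r) r := hdL.sub hdG
      have hev : ∀ᶠ t in 𝓝 r, 0 < L t - G t :=
        hdv.differentiableAt.continuousAt (Ioi_mem_nhds hvr)
      have hdpow : HasDerivAt (fun t => (L t - G t) ^ (2 * p - 1))
          ((deriv L r - deriv G r) * (2 * p - 1) * (L r - G r) ^ (2 * p - 1 - 1)) r :=
        hdv.rpow_const (Or.inl hvr.ne')
      have heq : (fun t => max (L t - G t) 0 ^ (2 * p - 1))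
          =ᶠ[𝓝 r] (fun t => (L t - G t) ^ (2 * p - 1)) :=
        hev.mono (fun t ht => by simp only [max_eq_left ht.le])
      have hdpow' : HasDerivAt (fun t => max (L t - G t) 0 ^ (2 * p - 1))
          ((deriv L r - deriv G r) * (2 * p - 1) * (L r - G r) ^ (2 * p - 1 - 1)) r :=
        hdpow.congr_of_eventuallyEq heq
      have hdF : HasDerivAt (fun t => φ t * max (L t - G t) 0 ^ (2 * p - 1) * h t)
          ((deriv φ r * max (L r - G r) 0 ^ (2 * p - 1) +
              φ r * ((deriv L r - deriv G r) * (2 * p - 1) * (L r - G r) ^ (2 * p - 1 - 1))) * h r +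
            φ r * max (L r - G r) 0 ^ (2 * p - 1) * deriv h r) r :=
        (hdφ.mul hdpow').mul hdh
      rw [hdF.deriv, hdh2, max_eq_left hvr.le]
      set w := L r - G r with hwdef
      have hw : 0 < w := hvr
      have e1 : w ^ (2 * p - 1) = w ^ (2 * p - 2) * w := by
        rw [show (2 * p - 1) = (2 * p - 2) + 1 by ring, Real.rpow_add_one hw.ne']
      have e1' : w ^ (2 * p - 1 - 1) = w ^ (2 * p - 2) := by rw [show (2 * p - 1 - 1) = 2 * p - 2 by ring]
      have e2 : w ^ (2 * p) = w ^ (2 * p - 2) * w * w := by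
        rw [← Real.rpow_add_one hw.ne', ← Real.rpow_add_one hw.ne']
        congr 1
        ring
      rw [e1, e1', e2]
      set E : ℝ := w ^ (2 * p - 2) with hEdef
      have hE : 0 < E := Real.rpow_pos_of_pos hw _
      set ρ : ℝ := max (K - κ r) 0 with hρdef
      set Mx : ℝ := max (deriv φ r / φ r - (4 * p - N - 1) / (N - 1) * G r) 0 with hMdef
      set X : ℝ := deriv L r - deriv G r with hXdef
      -- bounds
      have hXb : X ≤ ρ - w * (w + 2 * G r) / (N - 1) := by
        have h1 : deriv L r + L r ^ 2 / (N - 1) ≤ -κ r := hr1 hr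
        have h2 : deriv G r + G r ^ 2 / (N - 1) = -K := hRiccati r hr
        have hρ1 : K - κ r ≤ ρ := le_max_left _ _
        have h3 : w * (w + 2 * G r) / (N - 1) = L r ^ 2 / (N - 1) - G r ^ 2 / (N - 1) := by
          rw [hwdef]; field_simp; ring
        rw [hXdef, h3]; linarith
      have hφb : deriv φ r ≤ Mx * φ r + (4 * p - N - 1) / (N - 1) * G r * φ r := by
        have h1 : deriv φ r / φ r - (4 * p - N - 1) / (N - 1) * G r ≤ Mx := le_max_left _ _
        have h2 : deriv φ r / φ r * φ r = deriv φ r := div_mul_cancel₀ _ hP.ne'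
        nlinarith [mul_le_mul_of_nonneg_right h1 hP.le]
      have hLG : L r = w + G r := by rw [hwdef]; ring
      clear_value w E ρ Mx X
      -- monotone substitution
      have hcoef1 : (0:ℝ) ≤ E * w * h r := by positivity
      have hcoef2 : (0:ℝ) ≤ (2 * p - 1) * φ r * E * h r := by
        have : (0:ℝ) ≤ 2 * p - 1 := by linarith
        positivity
      have t1 := mul_le_mul_of_nonneg_right hφb hcoef1
      have t2 := mul_le_mul_of_nonneg_right hXb hcoef2
      have step1 : (deriv φ r * (E * w) + φ r * (X * (2 * p - 1) * E)) * h r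
          + φ r * (E * w) * (L r * h r)
          ≤ (Mx * φ r + (4 * p - N - 1) / (N - 1) * G r * φ r) * (E * w) * h r
            + φ r * ((ρ - w * (w + 2 * G r) / (N - 1)) * (2 * p - 1) * E) * h r
            + φ r * (E * w) * (L r * h r) := by nlinarith [t1, t2]
      refine le_trans (le_of_eq ?_) (step1.trans (le_of_eq ?_))
      · ring
      · rw [hLG]
        field_simp
        ring
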